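/- Let 1 < α < 2, X > 0, and let y be a real polynomial. Define u(x) = (1/Γ(α)) ∫₀ˣ (x − r)^{α−1} y(r) dr for x ∈ [0,X]. Then u is twice differentiable on (0,X], and for every x ∈ (0,X], the Caputo derivative of u of order α recovers y: (1/Γ(2−α)) ∫₀ˣ (x − r)^{1−α} u''(r) dr = y(x). -/

import Mathlib

open MeasureTheory intervalIntegral

lemma betaIntegrable {p q x : ℝ} (hp : -1 < p) (hq : -1 < q) (hx : 0 < x) :
    IntervalIntegrable (fun r => (x - r) ^ p * r ^ q) volume 0 x := by
  have hmeas : ∀ a b : ℝ, AEStronglyMeasurable (fun r => (x - r) ^ p * r ^ q)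
      (volume.restrict (Set.uIoc a b)) := by
    intro a b
    exact (((measurable_const.sub measurable_id).pow measurable_const).mul
      (measurable_id.pow measurable_const)).aestronglyMeasurable
  have h1 : IntervalIntegrable (fun r => (x - r) ^ p * r ^ q) volume 0 (x/2) := by
    apply IntervalIntegrable.mono_fun'
      (g := fun r => (max ((x/2) ^ p) (x ^ p)) * r ^ q)
      ((intervalIntegrable_rpow' hq).const_mul _) (hmeas 0 (x/2))
    rw [Set.uIoc_of_le (by linarith)]
    filter_upwards [ae_restrict_mem measurableSet_Ioc] with r hr
    have hr0 : 0 < r := hr.1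
    have hrx : r ≤ x / 2 := hr.2
    have hxr : x / 2 ≤ x - r := by linarith
    rw [Real.norm_eq_abs, abs_of_nonneg (mul_nonneg (Real.rpow_nonneg (by linarith) _)
      (Real.rpow_nonneg hr0.le _))]
    apply mul_le_mul_of_nonneg_right _ (Real.rpow_nonneg hr0.le _)
    rcases le_or_gt 0 p with h | h
    · exact le_max_of_le_right (Real.rpow_le_rpow (by linarith) (by linarith) h)
    · exact le_max_of_le_left (Real.rpow_le_rpow_of_nonpos (by linarith) hxr h.le)
  have h2 : IntervalIntegrable (fun r => (x - r) ^ p * r ^ q) volume (x/2) x := by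
    have base : IntervalIntegrable (fun r : ℝ => r ^ p) volume 0 (x/2) :=
      intervalIntegrable_rpow' hp
    have hcomp := (base.comp_sub_left x).symm
    have e1 : x - x / 2 = x / 2 := by ring
    have e2 : x - 0 = x := by ring
    rw [e1, e2] at hcomp
    apply IntervalIntegrable.mono_fun'
      (g := fun r => (max ((x/2) ^ q) (x ^ q)) * (x - r) ^ p)
      (hcomp.const_mul _) (hmeas (x/2) x)
    rw [Set.uIoc_of_le (by linarith)]
    filter_upwards [ae_restrict_mem measurableSet_Ioc] with r hr
    have hr0 : x/2 < r := hr.1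
    have hrx : r ≤ x := hr.2
    rw [Real.norm_eq_abs, abs_of_nonneg (mul_nonneg (Real.rpow_nonneg (by linarith) _)
      (Real.rpow_nonneg (by linarith) _)), mul_comm ((x-r)^p)]
    apply mul_le_mul_of_nonneg_right _ (Real.rpow_nonneg (by linarith) _)
    rcases le_or_gt 0 q with h | h
    · exact le_max_of_le_right (Real.rpow_le_rpow (by linarith) hrx h)
    · exact le_max_of_le_left (Real.rpow_le_rpow_of_nonpos (by linarith) hr0.le h.le)
  exact h1.trans h2

lemma betaValue {p q x : ℝ} (hp : -1 < p) (hq : -1 < q) (hx : 0 < x) :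
    ∫ r in (0:ℝ)..x, (x - r) ^ p * r ^ q =
      Real.Gamma (p + 1) * Real.Gamma (q + 1) / Real.Gamma (p + q + 2) * x ^ (p + q + 1) := by
  have key := Complex.betaIntegral_scaled (q + 1 : ℂ) (p + 1 : ℂ) hx
  have hs : 0 < (q + 1 : ℂ).re := by simp; linarith
  have ht : 0 < (p + 1 : ℂ).re := by simp; linarith
  have hGG := Complex.Gamma_mul_Gamma_eq_betaIntegral hs ht
  have hsum : (q + 1 : ℂ) + (p + 1 : ℂ) = ((p + q + 2 : ℝ) : ℂ) := by push_cast; ring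
  have hΓpos : 0 < Real.Gamma (p + q + 2) := Real.Gamma_pos_of_pos (by linarith)
  have hΓne : (Complex.Gamma ((q + 1 : ℂ) + (p + 1 : ℂ))) ≠ 0 := by
    rw [hsum, Complex.Gamma_ofReal]
    exact_mod_cast hΓpos.ne'
  have hbeta : Complex.betaIntegral (q + 1) (p + 1) =
      Complex.Gamma (q + 1) * Complex.Gamma (p + 1) / Complex.Gamma ((q + 1) + (p + 1)) := by
    field_simp [hGG]
    rw [hGG]; ring
  -- real integral as complex
  have hofReal : ((∫ r in (0:ℝ)..x, (x - r) ^ p * r ^ q : ℝ) : ℂ)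
      = ∫ r in (0:ℝ)..x, (r : ℂ) ^ ((q + 1 : ℂ) - 1) * ((x : ℂ) - r) ^ ((p + 1 : ℂ) - 1) := by
    rw [← intervalIntegral.integral_ofReal]
    apply intervalIntegral.integral_congr
    intro r hr
    rw [Set.uIcc_of_le hx.le] at hr
    have h0r : (0:ℝ) ≤ r := hr.1
    have hrx : (0:ℝ) ≤ x - r := by linarith [hr.2]
    show ((((x - r) ^ p * r ^ q : ℝ)) : ℂ) = (r : ℂ) ^ ((q + 1 : ℂ) - 1) * ((x : ℂ) - r) ^ ((p + 1 : ℂ) - 1)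
    have eq : (↑q + 1 - 1 : ℂ) = (q : ℂ) := by ring
    have ep : (↑p + 1 - 1 : ℂ) = (p : ℂ) := by ring
    rw [eq, ep, Complex.ofReal_mul, Complex.ofReal_cpow h0r, Complex.ofReal_cpow hrx]
    push_cast
    ring
  have this2 : ((x:ℂ)) ^ ((q+1:ℂ) + (p+1) - 1) *
      (Complex.Gamma (q + 1) * Complex.Gamma (p + 1) / Complex.Gamma ((q + 1) + (p + 1)))
      = ((Real.Gamma (p + 1) * Real.Gamma (q + 1) / Real.Gamma (p + q + 2) * x ^ (p + q + 1) : ℝ) : ℂ) := by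
    have e1 : ((q+1:ℂ) + (p+1) - 1) = ((p + q + 1 : ℝ) : ℂ) := by push_cast; ring
    have e2 : (q + 1 : ℂ) = ((q + 1 : ℝ) : ℂ) := by push_cast; ring
    have e3 : (p + 1 : ℂ) = ((p + 1 : ℝ) : ℂ) := by push_cast; ring
    rw [e1, hsum, e2, e3, Complex.Gamma_ofReal, Complex.Gamma_ofReal, Complex.Gamma_ofReal,
      ← Complex.ofReal_cpow hx.le]
    push_cast
    ring
  have final : ((∫ r in (0:ℝ)..x, (x - r) ^ p * r ^ q : ℝ) : ℂ)
      = ((Real.Gamma (p + 1) * Real.Gamma (q + 1) / Real.Gamma (p + q + 2) * x ^ (p + q + 1) : ℝ) : ℂ) := by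
    rw [hofReal, key, hbeta]; exact this2
  exact_mod_cast final

lemma mono1 {α x : ℝ} (hα1 : 1 < α) (hα2 : α < 2) (hx : 0 < x) (n : ℕ) :
    ∫ r in (0:ℝ)..x, (x - r) ^ (α - 1) * r ^ ((n:ℝ)) =
      Real.Gamma α * (Real.Gamma ((n:ℝ) + 1) / Real.Gamma ((n:ℝ) + 1 + α)) * x ^ ((n:ℝ) + α) := by
  have h := betaValue (p := α - 1) (q := (n:ℝ)) (by linarith)
    (lt_of_lt_of_le (by norm_num) (Nat.cast_nonneg n)) hx
  rw [h, show α - 1 + 1 = α from by ring, show α - 1 + (n:ℝ) + 2 = (n:ℝ) + 1 + α from by ring,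
    show α - 1 + (n:ℝ) + 1 = (n:ℝ) + α from by ring]
  ring

lemma mono2 {α x : ℝ} (hα1 : 1 < α) (hα2 : α < 2) (hx : 0 < x) (n : ℕ) :
    ∫ r in (0:ℝ)..x, (x - r) ^ (1 - α) * r ^ ((n:ℝ) + α - 2) =
      Real.Gamma (2 - α) * (Real.Gamma ((n:ℝ) + α - 1) / Real.Gamma ((n:ℝ) + 1)) * x ^ ((n:ℝ)) := by
  have hn0 : (0:ℝ) ≤ (n:ℝ) := Nat.cast_nonneg n
  have h := betaValue (p := 1 - α) (q := (n:ℝ) + α - 2) (by linarith) (by linarith) hx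
  rw [h, show 1 - α + 1 = 2 - α from by ring,
    show (n:ℝ) + α - 2 + 1 = (n:ℝ) + α - 1 from by ring,
    show 1 - α + ((n:ℝ) + α - 2) + 2 = (n:ℝ) + 1 from by ring,
    show 1 - α + ((n:ℝ) + α - 2) + 1 = (n:ℝ) from by ring]
  ring

/-- Let `1 < α < 2`, `X > 0` and let `y` be a real polynomial. Define
`u(x) = (1/Γ(α)) ∫₀ˣ (x − r)^{α−1} y(r) dr`. Then `u` is twice differentiable on
`(0,X]` and the Caputo derivative of order `α` of `u` recovers `y` there:
`(1/Γ(2−α)) ∫₀ˣ (x − r)^{1−α} u''(r) dr = y(x)` for all `x ∈ (0,X]`. -/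
theorem stmt_15 (α X : ℝ) (hα1 : 1 < α) (hα2 : α < 2) (hX : 0 < X)
    (y : Polynomial ℝ) (u : ℝ → ℝ)
    (hu : ∀ x : ℝ, u x = (1 / Real.Gamma α) *
      ∫ r in (0:ℝ)..x, (x - r) ^ (α - 1) * y.eval r) :
    ∃ u' u'' : ℝ → ℝ,
      (∀ x ∈ Set.Ioc (0:ℝ) X, HasDerivAt u (u' x) x ∧ HasDerivAt u' (u'' x) x) ∧
      (∀ x ∈ Set.Ioc (0:ℝ) X,
        (1 / Real.Gamma (2 - α)) *
          (∫ r in (0:ℝ)..x, (x - r) ^ (1 - α) * u'' r) = y.eval x) := by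
  set S := Finset.range (y.natDegree + 1) with hS
  set e : ℕ → ℝ := fun n => (n:ℝ) + α with he
  set b : ℕ → ℝ := fun n => y.coeff n * (Real.Gamma ((n:ℝ) + 1) / Real.Gamma ((n:ℝ) + 1 + α))
    with hb
  set v : ℝ → ℝ := fun x => ∑ n ∈ S, b n * x ^ (e n) with hv
  set v' : ℝ → ℝ := fun x => ∑ n ∈ S, b n * (e n * x ^ (e n - 1)) with hv'
  set v'' : ℝ → ℝ := fun x => ∑ n ∈ S, b n * (e n * ((e n - 1) * x ^ (e n - 2))) with hv''
  have hΓα : 0 < Real.Gamma α := Real.Gamma_pos_of_pos (by linarith)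
  -- Step A : u = v on Ioi 0
  have hA : ∀ x : ℝ, 0 < x → u x = v x := by
    intro x hx
    have hInt : ∀ n ∈ S, IntervalIntegrable
        (fun r => y.coeff n * ((x - r) ^ (α - 1) * r ^ ((n:ℝ)))) volume 0 x := by
      intro n _
      exact (betaIntegrable (by linarith)
        (lt_of_lt_of_le (by norm_num) (Nat.cast_nonneg n)) hx).const_mul _
    have hfun : (fun r => (x - r) ^ (α - 1) * y.eval r)
        = fun r => ∑ n ∈ S, y.coeff n * ((x - r) ^ (α - 1) * r ^ ((n:ℝ))) := by
      funext r
      rw [Polynomial.eval_eq_sum_range, Finset.mul_sum]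
      refine Finset.sum_congr rfl fun n _ => ?_
      rw [Real.rpow_natCast]
      ring
    rw [hu x, hfun, intervalIntegral.integral_finset_sum hInt]
    simp only [intervalIntegral.integral_const_mul]
    rw [Finset.mul_sum]
    refine Finset.sum_congr rfl fun n _ => ?_
    rw [mono1 hα1 hα2 hx n]
    simp only [hb, he]
    field_simp
  -- Step B : derivatives of v
  have hB1 : ∀ x : ℝ, 0 < x → HasDerivAt v (v' x) x := by
    intro x hx
    suffices h : HasDerivAt (∑ n ∈ S, fun z => b n * z ^ (e n))
        (∑ n ∈ S, b n * (e n * x ^ (e n - 1))) x by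
      convert h using 1; ext z; rw [Finset.sum_apply]
    exact HasDerivAt.sum fun n _ =>
      ((Real.hasDerivAt_rpow_const (p := e n) (Or.inl hx.ne')).const_mul (b n))
  have hB2 : ∀ x : ℝ, 0 < x → HasDerivAt v' (v'' x) x := by
    intro x hx
    suffices h : HasDerivAt (∑ n ∈ S, fun z => b n * (e n * z ^ (e n - 1)))
        (∑ n ∈ S, b n * (e n * ((e n - 1) * x ^ (e n - 2)))) x by
      convert h using 1; ext z; rw [Finset.sum_apply]
    refine HasDerivAt.sum fun n _ => ?_
    have h := (Real.hasDerivAt_rpow_const (x := x) (p := e n - 1) (Or.inl hx.ne'))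
    have h2 := (h.const_mul (e n)).const_mul (b n)
    simpa [show e n - 1 - 1 = e n - 2 from by ring] using h2
  refine ⟨v', v'', fun x hx => ?_, fun x hx => ?_⟩
  · have hveq : u =ᶠ[nhds x] v :=
      Filter.eventuallyEq_of_mem (Ioi_mem_nhds hx.1) fun z hz => hA z hz
    exact ⟨(hB1 x hx.1).congr_of_eventuallyEq hveq, hB2 x hx.1⟩
  -- Step C : Caputo derivative recovers y
  · have hx0 := hx.1
    have hΓ2α : 0 < Real.Gamma (2 - α) := Real.Gamma_pos_of_pos (by linarith)
    have hInt : ∀ n ∈ S, IntervalIntegrable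
        (fun r => (b n * (e n * (e n - 1))) * ((x - r) ^ (1 - α) * r ^ ((n:ℝ) + α - 2)))
        volume 0 x := by
      intro n _
      have hq : (-1:ℝ) < (n:ℝ) + α - 2 := by
        have := Nat.cast_nonneg (α := ℝ) n; linarith
      exact (betaIntegrable (by linarith) hq hx0).const_mul _
    have hfun : (fun r => (x - r) ^ (1 - α) * v'' r)
        = fun r => ∑ n ∈ S,
            (b n * (e n * (e n - 1))) * ((x - r) ^ (1 - α) * r ^ ((n:ℝ) + α - 2)) := by
      funext r
      rw [hv'', Finset.mul_sum]
      refine Finset.sum_congr rfl fun n _ => ?_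
      rw [he]
      ring_nf
    rw [hfun, intervalIntegral.integral_finset_sum hInt]
    simp only [intervalIntegral.integral_const_mul]
    have hterm : ∀ n ∈ S, (b n * (e n * (e n - 1))) *
        (∫ r in (0:ℝ)..x, (x - r) ^ (1 - α) * r ^ ((n:ℝ) + α - 2))
        = Real.Gamma (2 - α) * (y.coeff n * x ^ n) := by
      intro n _
      rw [mono2 hα1 hα2 hx0 n]
      have hn0 : (0:ℝ) ≤ (n:ℝ) := Nat.cast_nonneg n
      have hx1 : (0:ℝ) < (n:ℝ) + α := by linarith
      have hx2 : (0:ℝ) < (n:ℝ) + α - 1 := by linarith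
      have g1 : Real.Gamma ((n:ℝ) + 1 + α) = ((n:ℝ) + α) * Real.Gamma ((n:ℝ) + α) := by
        rw [show (n:ℝ) + 1 + α = ((n:ℝ) + α) + 1 from by ring, Real.Gamma_add_one hx1.ne']
      have g2 : Real.Gamma ((n:ℝ) + α) = ((n:ℝ) + α - 1) * Real.Gamma ((n:ℝ) + α - 1) := by
        rw [show (n:ℝ) + α = ((n:ℝ) + α - 1) + 1 from by ring, Real.Gamma_add_one hx2.ne']
        norm_num
      have hΓ1 : 0 < Real.Gamma ((n:ℝ) + 1) := Real.Gamma_pos_of_pos (by linarith)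
      have hΓ3 : 0 < Real.Gamma ((n:ℝ) + α - 1) := Real.Gamma_pos_of_pos hx2
      simp only [hb, he]
      rw [g1, g2, ← Real.rpow_natCast x n]
      field_simp
    rw [Finset.sum_congr rfl hterm, ← Finset.mul_sum]
    rw [Polynomial.eval_eq_sum_range]
    field_simp
    rfl
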